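/- Let k ≥ 2 and j₀ ≥ 1 be integers, let n = k·2^{j₀−1}, let q be a probability distribution on [n], and let ε ∈ (0,1). If ‖q − U_n‖_{A_k} ≥ ε, then there exists an integer j with 0 ≤ j ≤ j₀−1 such that ‖q_r^{I^{(j)}} − U_{ℓ_j}‖₂² ≥ 10^{−10}·2^{−j/4}·ε²/k, where ℓ_j = k·2^j. -/

import Mathlib

open Finset ProbabilityTheory MeasureTheory

/-- The probability mass that a function on `Fin n` assigns to the (0-indexed)
interval `[a, b)`. -/
noncomputable def intervalMass {n : ℕ} (q : Fin n → ℝ) (a b : ℕ) : ℝ :=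
  ∑ j ∈ Finset.univ.filter (fun j : Fin n => a ≤ (j : ℕ) ∧ (j : ℕ) < b), q j

/-- `q` is a probability distribution on `[n]` (identified with `Fin n`). -/
noncomputable def IsDist {n : ℕ} (q : Fin n → ℝ) : Prop := (∀ i, 0 ≤ q i) ∧ ∑ i, q i = 1

/-- The `A_k` distance between `p` and `q` on `Fin n`: the supremum, over all partitions of
`Fin n` into `k` consecutive intervals (described by their monotone sequence of boundary
points), of the sum of the discrepancies `|p(I) - q(I)|` over the intervals. -/
noncomputable def AkDist (n k : ℕ) (p q : Fin n → ℝ) : ℝ :=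
  sSup { x : ℝ | ∃ b : Fin (k + 1) → ℕ, Monotone b ∧ b 0 = 0 ∧ b (Fin.last k) = n ∧
    x = ∑ i : Fin k,
      |intervalMass p (b i.castSucc) (b i.succ) - intervalMass q (b i.castSucc) (b i.succ)| }

/-- The `L1` distance between two functions on `Fin n`. -/
noncomputable def L1Dist {n : ℕ} (p q : Fin n → ℝ) : ℝ := ∑ i, |p i - q i|

/-- The `L2` distance between two functions on `Fin n`. -/
noncomputable def L2Dist {n : ℕ} (p q : Fin n → ℝ) : ℝ := Real.sqrt (∑ i, (p i - q i) ^ 2)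

/-- The uniform distribution on `Fin n`. -/
noncomputable def unif (n : ℕ) : Fin n → ℝ := fun _ => 1 / n

/-- The probability that the `m`-fold product measure `q^{⊗m}` assigns to a set
`A ⊆ [n]^m` of sample sequences. -/
noncomputable def prodProb {n m : ℕ} (q : Fin n → ℝ) (A : Finset (Fin m → Fin n)) : ℝ :=
  ∑ x ∈ A, ∏ j, q (x j)

/-- The reduced distribution of `q` w.r.t. the partition of `Fin n` into `ℓ` consecutive
intervals of equal length `n / ℓ` (assuming `ℓ ∣ n`). -/
noncomputable def reducedDist {n : ℕ} (q : Fin n → ℝ) (ℓ : ℕ) : Fin ℓ → ℝ :=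
  fun i => intervalMass q ((i : ℕ) * (n / ℓ)) (((i : ℕ) + 1) * (n / ℓ))

/-- `p` is a `t`-piecewise degree-`d` function on `Fin n`: there is a partition of `Fin n`
into `t` consecutive intervals on each of which `p` agrees with a real polynomial of degree
at most `d`. -/
noncomputable def IsPiecewisePoly {n : ℕ} (t d : ℕ) (p : Fin n → ℝ) : Prop :=
  ∃ b : Fin (t + 1) → ℕ, Monotone b ∧ b 0 = 0 ∧ b (Fin.last t) = n ∧
    ∀ i : Fin t, ∃ P : Polynomial ℝ, P.degree ≤ (d : ℕ) ∧
      ∀ x : Fin n, b i.castSucc ≤ (x : ℕ) → (x : ℕ) < b i.succ → p x = P.eval ((x : ℕ) : ℝ)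

/-- `q` is `k`-flat: there is a partition of `Fin n` into `k` consecutive intervals
on each of which `q` is constant. -/
noncomputable def IsKFlat {n : ℕ} (k : ℕ) (q : Fin n → ℝ) : Prop :=
  ∃ b : Fin (k + 1) → ℕ, Monotone b ∧ b 0 = 0 ∧ b (Fin.last k) = n ∧
    ∀ i : Fin k, ∃ c : ℝ, ∀ x : Fin n, b i.castSucc ≤ (x : ℕ) → (x : ℕ) < b i.succ → q x = c

/-- The term `Discr(I)² / width(I)^{1/8}` for the interval `I = [a, b)` in `Fin n`, where
the discrepancy is `Discr(I) = |q(I) - U_n(I)|` and the width is `|I|/n` (relative to the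
uniform distribution `U_n`). -/
noncomputable def ssTerm {n : ℕ} (q : Fin n → ℝ) (a b : ℕ) : ℝ :=
  |intervalMass q a b - ((b - a : ℕ) : ℝ) / n| ^ 2 / (((b - a : ℕ) : ℝ) / n) ^ ((1 : ℝ) / 8)

/-- The squared scale-sensitive-`L2` distance between `q` and the uniform distribution
on `Fin n`, at scale `1/k`: the supremum, over all partitions of `Fin n` into consecutive
nonempty intervals each of width at most `1/k`, of `∑ Discr(I)² / width(I)^{1/8}`. -/
noncomputable def ssDistSq (n k : ℕ) (q : Fin n → ℝ) : ℝ :=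
  sSup { x : ℝ | ∃ r : ℕ, ∃ b : Fin (r + 1) → ℕ, StrictMono b ∧ b 0 = 0 ∧ b (Fin.last r) = n ∧
    (∀ i : Fin r, ((b i.succ - b i.castSucc : ℕ) : ℝ) / n ≤ 1 / k) ∧
    x = ∑ i : Fin r, ssTerm q (b i.castSucc) (b i.succ) }
namespace StructAux

noncomputable def fd {n : ℕ} (q : Fin n → ℝ) (a b : ℕ) : ℝ :=
  intervalMass q a b - ((b - a : ℕ) : ℝ) / n

lemma mass_add {n : ℕ} (q : Fin n → ℝ) {a b c : ℕ} (hab : a ≤ b) (hbc : b ≤ c) :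
    intervalMass q a c = intervalMass q a b + intervalMass q b c := by
  unfold intervalMass
  rw [← Finset.sum_union]
  · congr 1
    ext j
    simp only [Finset.mem_union, Finset.mem_filter, Finset.mem_univ, true_and]
    omega
  · rw [Finset.disjoint_left]
    intro j hj1 hj2
    simp only [Finset.mem_filter, Finset.mem_univ, true_and] at hj1 hj2
    omega

lemma fd_self {n : ℕ} (q : Fin n → ℝ) (a : ℕ) : fd q a a = 0 := by
  unfold fd intervalMass
  rw [Finset.filter_false_of_mem, Finset.sum_empty] <;> simp

lemma fd_add {n : ℕ} (q : Fin n → ℝ) {a b c : ℕ} (hab : a ≤ b) (hbc : b ≤ c) :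
    fd q a c = fd q a b + fd q b c := by
  unfold fd
  rw [mass_add q hab hbc]
  have h : ((c - a : ℕ) : ℝ) = ((b - a : ℕ) : ℝ) + ((c - b : ℕ) : ℝ) := by
    have h2 : c - a = (b - a) + (c - b) := by omega
    rw [h2]; push_cast; ring
  rw [h]; ring

lemma fd_sum {n : ℕ} (q : Fin n → ℝ) (w : ℕ) {α β : ℕ} (hab : α ≤ β) :
    fd q (α * w) (β * w) = ∑ m ∈ Finset.Ico α β, fd q (m * w) ((m + 1) * w) := by
  induction β, hab using Nat.le_induction with
  | base => simp [fd_self]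
  | succ β hb ih =>
      rw [Finset.sum_Ico_succ_top (by omega : α ≤ β), ← ih,
        ← fd_add q (Nat.mul_le_mul_right w hb) (Nat.mul_le_mul_right w (Nat.le_succ β))]

lemma unif_mass {n : ℕ} (a b : ℕ) (hb : b ≤ n) :
    intervalMass (unif n) a b = ((b - a : ℕ) : ℝ) / n := by
  by_cases hab : a ≤ b
  · unfold intervalMass unif
    rw [Finset.sum_const]
    have hcard : (Finset.univ.filter (fun j : Fin n => a ≤ (j : ℕ) ∧ (j : ℕ) < b)).card
        = b - a := by
      have himg : (Finset.univ.filter (fun j : Fin n => a ≤ (j : ℕ) ∧ (j : ℕ) < b)).image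
          (Fin.val) = Finset.Ico a b := by
        ext t
        simp only [Finset.mem_image, Finset.mem_filter, Finset.mem_univ, true_and,
          Finset.mem_Ico]
        constructor
        · rintro ⟨j, hj, rfl⟩; exact hj
        · rintro ⟨h1, h2⟩; exact ⟨⟨t, lt_of_lt_of_le h2 hb⟩, ⟨h1, h2⟩, rfl⟩
      rw [← Finset.card_image_of_injective _ Fin.val_injective, himg, Nat.card_Ico]
    rw [hcard]
    push_cast
    ring
  · unfold intervalMass
    rw [Finset.filter_false_of_mem (by intro j hj; omega), Finset.sum_empty]
    have : b - a = 0 := by omega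
    rw [this]
    simp

end StructAux
namespace StructAux

lemma decomp {n : ℕ} (j₀ : ℕ) (q : Fin n → ℝ) (j : ℕ) (hj : j ≤ j₀ - 1) :
    ∀ a b : ℕ, 2 ^ (j₀ - 1 - j) ∣ a → 2 ^ (j₀ - 1 - j) ∣ b → a ≤ b →
    ∃ T : ℕ → Finset ℕ,
      (∀ j' m, m ∈ T j' → a ≤ m * 2 ^ (j₀ - 1 - j') ∧ (m + 1) * 2 ^ (j₀ - 1 - j') ≤ b) ∧
      (∀ j', 1 ≤ j' → (T j').card ≤ 2) ∧
      (∀ j', j < j' → T j' = ∅) ∧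
      |fd q a b| ≤ ∑ j' ∈ Finset.range (j + 1), ∑ m ∈ T j',
        |fd q (m * 2 ^ (j₀ - 1 - j')) ((m + 1) * 2 ^ (j₀ - 1 - j'))| := by
  induction j with
  | zero =>
    intro a b ⟨α, ha⟩ ⟨β, hb⟩ hab
    have hw : 0 < 2 ^ (j₀ - 1 - 0) := Nat.pow_pos (by norm_num)
    subst ha hb
    have hαβ : α ≤ β := Nat.le_of_mul_le_mul_left hab hw
    refine ⟨fun j' => if j' = 0 then Finset.Ico α β else ∅, ?_, ?_, ?_, ?_⟩
    · intro j' m hm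
      simp only [] at hm
      split_ifs at hm with h0
      · subst h0
        rw [Finset.mem_Ico] at hm
        constructor
        · rw [mul_comm (2 ^ _) α]; exact Nat.mul_le_mul_right _ hm.1
        · rw [mul_comm (2 ^ _) β]; exact Nat.mul_le_mul_right _ hm.2
      · exact absurd hm (by simp)
    · intro j' hj'
      simp only []
      split_ifs with h0
      · omega
      · simp
    · intro j' hj'
      simp only []
      rw [if_neg (by omega)]
    · rw [Finset.sum_range_one]
      simp only [if_pos rfl]
      rw [mul_comm (2 ^ _) α, mul_comm (2 ^ _) β, fd_sum q _ hαβ]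
      exact Finset.abs_sum_le_sum_abs _ _
  | succ j ih =>
    intro a b ⟨α, ha⟩ ⟨β, hb⟩ hab
    set w := 2 ^ (j₀ - 1 - (j + 1)) with hw_def
    have hwpos : 0 < w := Nat.pow_pos (by norm_num)
    have hW : 2 ^ (j₀ - 1 - j) = w * 2 := by
      rw [hw_def, ← pow_succ]
      congr 1
      omega
    rw [mul_comm] at ha hb
    subst ha hb
    have hαβ : α ≤ β := Nat.le_of_mul_le_mul_right hab hwpos
    by_cases hcase : β ≤ α + 1
    · refine ⟨fun j' => if j' = j + 1 then Finset.Ico α β else ∅, ?_, ?_, ?_, ?_⟩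
      · intro j' m hm
        simp only [] at hm
        split_ifs at hm with h0
        · subst h0
          rw [Finset.mem_Ico] at hm
          exact ⟨Nat.mul_le_mul_right _ hm.1, Nat.mul_le_mul_right _ hm.2⟩
        · exact absurd hm (by simp)
      · intro j' _
        simp only []
        split_ifs with h0
        · rw [Nat.card_Ico]; omega
        · simp
      · intro j' hj'
        simp only []
        rw [if_neg (by omega)]
      · rw [Finset.sum_eq_single_of_mem (j + 1) (Finset.self_mem_range_succ _)
          (by intro b _ hb; simp [hb])]
        simp only [if_pos rfl]
        rw [fd_sum q _ hαβ]
        exact Finset.abs_sum_le_sum_abs _ _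
    · -- α + 2 ≤ β
      set α' := α + α % 2 with hα'
      set β' := β - β % 2 with hβ'
      have hord : α ≤ α' ∧ α' ≤ β' ∧ β' ≤ β := by omega
      have h2a : 2 ∣ α' := by omega
      have h2b : 2 ∣ β' := by omega
      have hdvd1 : 2 ^ (j₀ - 1 - j) ∣ α' * w :=
        ⟨α' / 2, by rw [hW, mul_assoc, Nat.mul_div_cancel' h2a, mul_comm]⟩
      have hdvd2 : 2 ^ (j₀ - 1 - j) ∣ β' * w :=
        ⟨β' / 2, by rw [hW, mul_assoc, Nat.mul_div_cancel' h2b, mul_comm]⟩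
      obtain ⟨T', hcont', hcard', hsupp', hsum'⟩ := ih (by omega) (α' * w) (β' * w)
        hdvd1 hdvd2 (Nat.mul_le_mul_right _ hord.2.1)
      refine ⟨fun j' => if j' = j + 1 then Finset.Ico α α' ∪ Finset.Ico β' β else T' j',
        ?_, ?_, ?_, ?_⟩
      · intro j' m hm
        simp only [] at hm
        split_ifs at hm with h0
        · subst h0
          rw [Finset.mem_union, Finset.mem_Ico, Finset.mem_Ico] at hm
          rcases hm with hm | hm
          · exact ⟨Nat.mul_le_mul_right _ hm.1,
              Nat.mul_le_mul_right _ (by omega : m + 1 ≤ β)⟩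
          · exact ⟨Nat.mul_le_mul_right _ (by omega : α ≤ m),
              Nat.mul_le_mul_right _ hm.2⟩
        · obtain ⟨h1, h2⟩ := hcont' j' m hm
          exact ⟨le_trans (Nat.mul_le_mul_right _ hord.1) h1,
            le_trans h2 (Nat.mul_le_mul_right _ hord.2.2)⟩
      · intro j' hj'
        simp only []
        split_ifs with h0
        · refine le_trans (Finset.card_union_le _ _) ?_
          rw [Nat.card_Ico, Nat.card_Ico]; omega
        · exact hcard' j' hj'
      · intro j' hj'
        simp only []
        rw [if_neg (by omega), hsupp' j' (by omega)]
      · have hd1 : fd q (α * w) (β * w)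
            = fd q (α * w) (α' * w) + fd q (α' * w) (β' * w) + fd q (β' * w) (β * w) := by
          rw [fd_add q (Nat.mul_le_mul_right _ hord.1)
            (Nat.mul_le_mul_right _ (by omega : α' ≤ β)),
            fd_add q (Nat.mul_le_mul_right _ hord.2.1)
            (Nat.mul_le_mul_right _ hord.2.2)]
          ring
        have htri : |fd q (α * w) (β * w)| ≤
            |fd q (α * w) (α' * w)| + |fd q (α' * w) (β' * w)| + |fd q (β' * w) (β * w)| := by
          rw [hd1]
          exact le_trans (abs_add_le _ _) (by gcongr; exact abs_add_le _ _)
        have h1 : |fd q (α * w) (α' * w)| ≤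
            ∑ m ∈ Finset.Ico α α', |fd q (m * w) ((m + 1) * w)| := by
          rw [fd_sum q _ hord.1]; exact Finset.abs_sum_le_sum_abs _ _
        have h2 : |fd q (β' * w) (β * w)| ≤
            ∑ m ∈ Finset.Ico β' β, |fd q (m * w) ((m + 1) * w)| := by
          rw [fd_sum q _ hord.2.2]; exact Finset.abs_sum_le_sum_abs _ _
        have hRHS : (∑ j' ∈ Finset.range (j + 1 + 1), ∑ m ∈
              (fun j' => if j' = j + 1 then Finset.Ico α α' ∪ Finset.Ico β' β else T' j') j',
              |fd q (m * 2 ^ (j₀ - 1 - j')) ((m + 1) * 2 ^ (j₀ - 1 - j'))|)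
            = (∑ j' ∈ Finset.range (j + 1), ∑ m ∈ T' j',
                |fd q (m * 2 ^ (j₀ - 1 - j')) ((m + 1) * 2 ^ (j₀ - 1 - j'))|)
              + ((∑ m ∈ Finset.Ico α α', |fd q (m * w) ((m + 1) * w)|)
              + (∑ m ∈ Finset.Ico β' β, |fd q (m * w) ((m + 1) * w)|)) := by
          rw [Finset.sum_range_succ]
          congr 1
          · apply Finset.sum_congr rfl
            intro j' hj'
            simp only []
            rw [if_neg (by simp only [Finset.mem_range] at hj'; omega)]
          · beta_reduce
            rw [if_pos rfl, Finset.sum_union (by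
              rw [Finset.disjoint_left]
              intro m hm1 hm2
              simp only [Finset.mem_Ico] at hm1 hm2
              omega)]
        rw [hRHS]
        calc |fd q (α * w) (β * w)|
            ≤ |fd q (α * w) (α' * w)| + |fd q (α' * w) (β' * w)| + |fd q (β' * w) (β * w)| :=
              htri
          _ ≤ _ := by
              have := add_le_add (add_le_add h1 hsum') h2
              linarith

end StructAux
namespace StructAux

lemma decomp' {n : ℕ} (j₀ : ℕ) (hj₀ : 1 ≤ j₀) (q : Fin n → ℝ) (a b : ℕ) (hab : a ≤ b) :
    ∃ T : ℕ → Finset ℕ,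
      (∀ j' m, m ∈ T j' → a ≤ m * 2 ^ (j₀ - 1 - j') ∧ (m + 1) * 2 ^ (j₀ - 1 - j') ≤ b) ∧
      (∀ j', 1 ≤ j' → (T j').card ≤ 2) ∧
      |fd q a b| ≤ ∑ j' ∈ Finset.range j₀, ∑ m ∈ T j',
        |fd q (m * 2 ^ (j₀ - 1 - j')) ((m + 1) * 2 ^ (j₀ - 1 - j'))| := by
  obtain ⟨T, h1, h2, h3, h4⟩ := decomp j₀ q (j₀ - 1) le_rfl a b
    (by rw [Nat.sub_self]; simp) (by rw [Nat.sub_self]; simp) hab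
  refine ⟨T, h1, h2, ?_⟩
  have he : j₀ - 1 + 1 = j₀ := by omega
  rwa [he] at h4

lemma sum_abs_le_sqrt (s : Finset ℕ) (f : ℕ → ℝ) (C D : ℝ) (hC : (s.card : ℝ) ≤ C)
    (hD : ∑ m ∈ s, f m ^ 2 ≤ D) :
    ∑ m ∈ s, |f m| ≤ Real.sqrt C * Real.sqrt D := by
  have hcs := Finset.sum_mul_sq_le_sq_mul_sq s (fun _ => 1) (fun m => |f m|)
  simp only [one_pow, one_mul, Finset.sum_const, nsmul_eq_mul, mul_one, sq_abs] at hcs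
  have h0 : 0 ≤ ∑ m ∈ s, |f m| := Finset.sum_nonneg fun m _ => abs_nonneg _
  have hsq0 : 0 ≤ ∑ m ∈ s, f m ^ 2 := Finset.sum_nonneg fun m _ => sq_nonneg _
  have hCD : (∑ m ∈ s, |f m|) ^ 2 ≤ C * D := by
    refine le_trans hcs ?_
    have := mul_le_mul hC hD hsq0 (le_trans (Nat.cast_nonneg _) hC)
    exact this
  have := Real.sqrt_le_sqrt hCD
  rwa [Real.sqrt_sq h0, Real.sqrt_mul (le_trans (Nat.cast_nonneg _) hC)] at this

lemma geom_bound (j₀ : ℕ) : ∑ j ∈ Finset.range j₀, ((2:ℝ) ^ (-(1:ℝ)/8)) ^ j ≤ 13 := by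
  set r : ℝ := (2:ℝ) ^ (-(1:ℝ)/8) with hr_def
  have hr0 : (0:ℝ) ≤ r := Real.rpow_nonneg (by norm_num) _
  have hr1 : r < 1 := Real.rpow_lt_one_of_one_lt_of_neg (by norm_num) (by norm_num)
  have hr : r ≤ 12/13 := by
    have h8 : ((13:ℝ)/12) ≤ 2 ^ ((1:ℝ)/8) := by
      have hpow : ((2:ℝ) ^ ((1:ℝ)/8)) ^ (8:ℕ) = 2 := by
        rw [← Real.rpow_natCast ((2:ℝ) ^ ((1:ℝ)/8)) 8, ← Real.rpow_mul (by norm_num)]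
        norm_num
      refine le_of_pow_le_pow_left₀ (by norm_num : (8:ℕ) ≠ 0)
        (Real.rpow_nonneg (by norm_num) _) ?_
      rw [hpow]; norm_num
    have hinv : ((2:ℝ) ^ ((1:ℝ)/8))⁻¹ ≤ ((13:ℝ)/12)⁻¹ :=
      inv_anti₀ (by norm_num) h8
    have heq : r = ((2:ℝ) ^ ((1:ℝ)/8))⁻¹ := by
      rw [hr_def, ← Real.rpow_neg (by norm_num)]
      norm_num
    rw [heq]
    refine le_trans hinv (by norm_num)
  have hne : r ≠ 1 := ne_of_lt hr1
  rw [geom_sum_eq hne]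
  rw [div_le_iff_of_neg (by linarith : r - 1 < 0)]
  nlinarith [pow_nonneg hr0 j₀]

end StructAux
/-- **Structural lemma (general case).** For `n = k·2^{j₀-1}`, if `‖q - U_n‖_{A_k} ≥ ε` then
for some level `0 ≤ j ≤ j₀-1` the reduced distribution of `q` on the partition of `[n]` into
`ℓ_j = k·2^j` equal intervals satisfies `‖q_r - U_{ℓ_j}‖₂² ≥ 10⁻¹⁰ · 2^{-j/4} · ε²/k`. -/
theorem structural_lemma_general (k j₀ : ℕ) (hk : 2 ≤ k) (hj₀ : 1 ≤ j₀)
    (q : Fin (k * 2 ^ (j₀ - 1)) → ℝ) (hq : IsDist q) (ε : ℝ) (hε : 0 < ε) (hε1 : ε < 1)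
    (h : ε ≤ AkDist (k * 2 ^ (j₀ - 1)) k q (unif (k * 2 ^ (j₀ - 1)))) :
    ∃ j ≤ j₀ - 1,
      (10 : ℝ) ^ (-10 : ℤ) * (2 : ℝ) ^ (-(j : ℝ) / 4) * ε ^ 2 / k ≤
        ∑ i : Fin (k * 2 ^ j), (reducedDist q (k * 2 ^ j) i - 1 / (k * 2 ^ j : ℝ)) ^ 2 := by
  classical
  by_contra hcon
  push_neg at hcon
  have hkpos : 0 < k := by omega
  have hfac : ∀ j, j ≤ j₀ - 1 →
      k * 2 ^ (j₀ - 1) = (k * 2 ^ j) * 2 ^ (j₀ - 1 - j) := by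
    intro j hj
    rw [mul_assoc, ← pow_add]
    congr 2
    omega
  set E : ℕ → ℝ := fun j => ∑ m ∈ Finset.range (k * 2 ^ j),
    (StructAux.fd q (m * 2 ^ (j₀ - 1 - j)) ((m + 1) * 2 ^ (j₀ - 1 - j))) ^ 2 with hE
  -- E j equals the reduced-distribution L2 distance squared
  have hEeq : ∀ j, j ≤ j₀ - 1 →
      E j = ∑ i : Fin (k * 2 ^ j), (reducedDist q (k * 2 ^ j) i - 1 / (k * 2 ^ j : ℝ)) ^ 2 := by
    intro j hj
    have hfj := hfac j hj
    have hndiv : k * 2 ^ (j₀ - 1) / (k * 2 ^ j) = 2 ^ (j₀ - 1 - j) := by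
      rw [hfj]
      exact Nat.mul_div_cancel_left _ (by positivity)
    have hfin : ∑ i : Fin (k * 2 ^ j), (reducedDist q (k * 2 ^ j) i - 1 / (k * 2 ^ j : ℝ)) ^ 2
        = ∑ m ∈ Finset.range (k * 2 ^ j),
          (intervalMass q (m * (k * 2 ^ (j₀ - 1) / (k * 2 ^ j)))
            ((m + 1) * (k * 2 ^ (j₀ - 1) / (k * 2 ^ j))) - 1 / (k * 2 ^ j : ℝ)) ^ 2 :=
      Fin.sum_univ_eq_sum_range
        (fun m => (intervalMass q (m * (k * 2 ^ (j₀ - 1) / (k * 2 ^ j)))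
          ((m + 1) * (k * 2 ^ (j₀ - 1) / (k * 2 ^ j))) - 1 / (k * 2 ^ j : ℝ)) ^ 2) _
    rw [hfin, hE]
    apply Finset.sum_congr rfl
    intro m _
    rw [hndiv]
    congr 2
    unfold StructAux.fd
    congr 1
    have h1 : (m + 1) * 2 ^ (j₀ - 1 - j) - m * 2 ^ (j₀ - 1 - j) = 2 ^ (j₀ - 1 - j) := by
      rw [Nat.succ_mul, Nat.add_sub_cancel_left]
    rw [h1, hfj]
    push_cast
    rw [div_eq_div_iff (by positivity) (by positivity)]
    ring
  -- the bound on the AkDist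
  set Bnd : ℝ := ∑ j' ∈ Finset.range j₀,
    Real.sqrt (if j' = 0 then (k:ℝ) else 2*k) * Real.sqrt (E j') with hBnd
  have hsup : AkDist (k * 2 ^ (j₀ - 1)) k q (unif (k * 2 ^ (j₀ - 1))) ≤ Bnd := by
    unfold AkDist
    apply Real.sSup_le
    · rintro x ⟨bd, hmono, hb0, hblast, hxeq⟩
      have hble : ∀ i : Fin k, bd i.succ ≤ k * 2 ^ (j₀ - 1) := by
        intro i
        rw [← hblast]
        exact hmono (Fin.le_last _)
      have hinterval : ∀ i : Fin k, bd i.castSucc ≤ bd i.succ :=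
        fun i => hmono (Fin.castSucc_le_succ i)
      choose T hcont hcard hfd using fun i : Fin k =>
        StructAux.decomp' j₀ hj₀ q (bd i.castSucc) (bd i.succ) (hinterval i)
      set U : ℕ → Finset ℕ := fun j' => Finset.univ.biUnion (fun i : Fin k => T i j')
        with hU
      have hWpos : ∀ j' : ℕ, 0 < 2 ^ (j₀ - 1 - j') :=
        fun j' => Nat.pow_pos (by norm_num)
      have hpd : ∀ j', (↑(Finset.univ : Finset (Fin k)) : Set (Fin k)).PairwiseDisjoint
          (fun i => T i j') := by
        intro j'
        have key : ∀ i1 i2 : Fin k, i1 < i2 → Disjoint (T i1 j') (T i2 j') := by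
          intro i1 i2 hlt
          rw [Finset.disjoint_left]
          intro m hm1 hm2
          have h1 := (hcont i1 j' m hm1).2
          have h2 := (hcont i2 j' m hm2).1
          have h3 : bd i1.succ ≤ bd i2.castSucc := by
            apply hmono
            rw [Fin.le_def]
            simp only [Fin.val_succ, Fin.coe_castSucc]
            rw [Fin.lt_def] at hlt
            omega
          have h4 : m * 2 ^ (j₀ - 1 - j') < (m + 1) * 2 ^ (j₀ - 1 - j') :=
            (Nat.mul_lt_mul_right (hWpos j')).mpr (lt_add_one m)
          omega
        intro i1 _ i2 _ hne
        rcases lt_or_gt_of_ne hne with hlt | hlt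
        · exact key _ _ hlt
        · exact (key _ _ hlt).symm
      have hcardU : ∀ j' ∈ Finset.range j₀,
          ((U j').card : ℝ) ≤ (if j' = 0 then (k:ℝ) else 2*k) := by
        intro j' _
        split_ifs with h0
        · subst h0
          have hsub : U 0 ⊆ Finset.range k := by
            intro m hm
            rw [hU, Finset.mem_biUnion] at hm
            obtain ⟨i, _, hmi⟩ := hm
            have h2 := (hcont i 0 m hmi).2
            have h3 := hble i
            rw [Finset.mem_range]
            have h5 : (m + 1) * 2 ^ (j₀ - 1 - 0) ≤ k * 2 ^ (j₀ - 1 - 0) := by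
              rw [Nat.sub_zero]
              exact le_trans h2 h3
            have := Nat.le_of_mul_le_mul_right h5 (hWpos 0)
            omega
          have := Finset.card_le_card hsub
          rw [Finset.card_range] at this
          exact_mod_cast this
        · have h1 : (U j').card ≤ ∑ i : Fin k, (T i j').card := Finset.card_biUnion_le
          have h2 : ∑ i : Fin k, (T i j').card ≤ ∑ _i : Fin k, 2 :=
            Finset.sum_le_sum (fun i _ => hcard i j' (by omega))
          have h3 : (U j').card ≤ k * 2 := by
            refine le_trans h1 (le_trans h2 ?_)
            rw [Finset.sum_const, Finset.card_univ, Fintype.card_fin, smul_eq_mul]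
          calc ((U j').card : ℝ) ≤ (k * 2 : ℕ) := by exact_mod_cast h3
            _ = 2 * k := by push_cast; ring
      have hsq : ∀ j' ∈ Finset.range j₀, ∑ m ∈ U j',
          (StructAux.fd q (m * 2 ^ (j₀ - 1 - j')) ((m + 1) * 2 ^ (j₀ - 1 - j'))) ^ 2
          ≤ E j' := by
        intro j' hj'
        rw [Finset.mem_range] at hj'
        have hsub : U j' ⊆ Finset.range (k * 2 ^ j') := by
          intro m hm
          rw [hU, Finset.mem_biUnion] at hm
          obtain ⟨i, _, hmi⟩ := hm
          have h2 := (hcont i j' m hmi).2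
          have h3 := hble i
          have h4 := hfac j' (by omega)
          rw [Finset.mem_range]
          have h5 : (m + 1) * 2 ^ (j₀ - 1 - j') ≤ (k * 2 ^ j') * 2 ^ (j₀ - 1 - j') := by
            rw [← h4]
            exact le_trans h2 h3
          have := Nat.le_of_mul_le_mul_right h5 (hWpos j')
          omega
        rw [hE]
        exact Finset.sum_le_sum_of_subset_of_nonneg hsub (fun m _ _ => sq_nonneg _)
      calc x = ∑ i : Fin k, |StructAux.fd q (bd i.castSucc) (bd i.succ)| := by
            rw [hxeq]
            apply Finset.sum_congr rfl
            intro i _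
            rw [StructAux.unif_mass _ _ (hble i)]
            rfl
        _ ≤ ∑ i : Fin k, ∑ j' ∈ Finset.range j₀, ∑ m ∈ T i j',
              |StructAux.fd q (m * 2 ^ (j₀ - 1 - j')) ((m + 1) * 2 ^ (j₀ - 1 - j'))| :=
            Finset.sum_le_sum (fun i _ => hfd i)
        _ = ∑ j' ∈ Finset.range j₀, ∑ i : Fin k, ∑ m ∈ T i j',
              |StructAux.fd q (m * 2 ^ (j₀ - 1 - j')) ((m + 1) * 2 ^ (j₀ - 1 - j'))| :=
            Finset.sum_comm
        _ ≤ ∑ j' ∈ Finset.range j₀,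
              Real.sqrt (if j' = 0 then (k:ℝ) else 2*k) * Real.sqrt (E j') := by
            apply Finset.sum_le_sum
            intro j' hj'
            rw [← Finset.sum_biUnion (hpd j')]
            exact StructAux.sum_abs_le_sqrt _ _ _ _ (hcardU j' hj') (hsq j' hj')
        _ = Bnd := hBnd.symm
    · rw [hBnd]
      positivity
  have hεB : ε ≤ Bnd := le_trans h hsup
  -- numeric contradiction
  set r : ℝ := (2:ℝ) ^ (-(1:ℝ)/8) with hr_def
  have hr0 : (0:ℝ) ≤ r := Real.rpow_nonneg (by norm_num) _
  have hrj : ∀ j' : ℕ, r ^ j' * r ^ j' = (2:ℝ) ^ (-(j' : ℝ)/4) := by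
    intro j'
    rw [hr_def, ← Real.rpow_natCast ((2:ℝ) ^ (-(1:ℝ)/8)) j', ← Real.rpow_mul (by norm_num),
      ← Real.rpow_add (by norm_num : (0:ℝ) < 2)]
    congr 1
    ring
  have hsqk : (0:ℝ) < Real.sqrt k := Real.sqrt_pos.mpr (by exact_mod_cast hkpos)
  have hsqrtE : ∀ j' ∈ Finset.range j₀,
      Real.sqrt (E j') ≤ (1/100000) * r ^ j' * ε / Real.sqrt k := by
    intro j' hj'
    rw [Finset.mem_range] at hj'
    have h1 := hcon j' (by omega)
    rw [← hEeq j' (by omega)] at h1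
    have ht0 : (0:ℝ) ≤ (1/100000) * r ^ j' * ε / Real.sqrt k := by positivity
    have heq : ((1/100000:ℝ) * r ^ j' * ε / Real.sqrt k) ^ 2
        = (10 : ℝ) ^ (-10 : ℤ) * (2 : ℝ) ^ (-(j' : ℝ) / 4) * ε ^ 2 / k := by
      rw [div_pow, Real.sq_sqrt (Nat.cast_nonneg k), mul_pow, mul_pow, sq (r ^ j'), hrj j']
      norm_num
    have h2 : E j' ≤ ((1/100000:ℝ) * r ^ j' * ε / Real.sqrt k) ^ 2 := by
      rw [heq]
      exact le_of_lt h1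
    calc Real.sqrt (E j') ≤ Real.sqrt (((1/100000:ℝ) * r ^ j' * ε / Real.sqrt k) ^ 2) :=
          Real.sqrt_le_sqrt h2
      _ = (1/100000:ℝ) * r ^ j' * ε / Real.sqrt k := Real.sqrt_sq ht0
  have hsqrt2 : Real.sqrt 2 ≤ 3/2 := by
    have h1 : Real.sqrt 2 ≤ Real.sqrt (9/4) := Real.sqrt_le_sqrt (by norm_num)
    have h2 : Real.sqrt (9/4 : ℝ) = 3/2 := by
      rw [show (9/4:ℝ) = (3/2)^2 by norm_num, Real.sqrt_sq (by norm_num)]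
    linarith
  have hgeom : ∑ j' ∈ Finset.Ico 1 j₀, r ^ j' ≤ 13 := by
    refine le_trans (Finset.sum_le_sum_of_subset_of_nonneg ?_ ?_) (StructAux.geom_bound j₀)
    · intro m hm
      rw [Finset.mem_Ico] at hm
      rw [Finset.mem_range]
      omega
    · intro m _ _
      exact pow_nonneg hr0 m
  have hsplit : Bnd = Real.sqrt (k:ℝ) * Real.sqrt (E 0)
      + ∑ j' ∈ Finset.Ico 1 j₀, Real.sqrt (2*(k:ℝ)) * Real.sqrt (E j') := by
    rw [hBnd, Finset.range_eq_Ico, Finset.sum_eq_sum_Ico_succ_bot (by omega : 0 < j₀)]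
    simp only [zero_add]
    congr 1
    apply Finset.sum_congr rfl
    intro j' hj'
    rw [Finset.mem_Ico] at hj'
    rw [if_neg (by omega)]
  have hterm0 : Real.sqrt (k:ℝ) * Real.sqrt (E 0) ≤ (1/100000) * ε := by
    have hs := hsqrtE 0 (by rw [Finset.mem_range]; omega)
    calc Real.sqrt (k:ℝ) * Real.sqrt (E 0)
        ≤ Real.sqrt (k:ℝ) * ((1/100000) * r ^ 0 * ε / Real.sqrt k) :=
          mul_le_mul_of_nonneg_left hs (Real.sqrt_nonneg _)
      _ = (1/100000) * ε := by
          rw [pow_zero]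
          field_simp
  have hterms : ∀ j' ∈ Finset.Ico 1 j₀,
      Real.sqrt (2*(k:ℝ)) * Real.sqrt (E j') ≤ Real.sqrt 2 * ((1/100000) * ε) * r ^ j' := by
    intro j' hj'
    rw [Finset.mem_Ico] at hj'
    have hs := hsqrtE j' (by rw [Finset.mem_range]; omega)
    calc Real.sqrt (2*(k:ℝ)) * Real.sqrt (E j')
        ≤ Real.sqrt (2*(k:ℝ)) * ((1/100000) * r ^ j' * ε / Real.sqrt k) :=
          mul_le_mul_of_nonneg_left hs (Real.sqrt_nonneg _)
      _ = Real.sqrt 2 * ((1/100000) * ε) * r ^ j' := by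
          rw [Real.sqrt_mul (by norm_num : (0:ℝ) ≤ 2)]
          field_simp [hsqk.ne']
  have hBnd_le : Bnd ≤ (1/100000) * ε + Real.sqrt 2 * ((1/100000) * ε) * 13 := by
    rw [hsplit]
    have h2 : ∑ j' ∈ Finset.Ico 1 j₀, Real.sqrt (2*(k:ℝ)) * Real.sqrt (E j')
        ≤ ∑ j' ∈ Finset.Ico 1 j₀, Real.sqrt 2 * ((1/100000) * ε) * r ^ j' :=
      Finset.sum_le_sum hterms
    have h3 : ∑ j' ∈ Finset.Ico 1 j₀, Real.sqrt 2 * ((1/100000) * ε) * r ^ j'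
        = Real.sqrt 2 * ((1/100000) * ε) * ∑ j' ∈ Finset.Ico 1 j₀, r ^ j' :=
      (Finset.mul_sum _ _ _).symm
    have h4 : Real.sqrt 2 * ((1/100000) * ε) * (∑ j' ∈ Finset.Ico 1 j₀, r ^ j')
        ≤ Real.sqrt 2 * ((1/100000) * ε) * 13 :=
      mul_le_mul_of_nonneg_left hgeom (by positivity)
    linarith
  have hfin : Real.sqrt 2 * ((1/100000) * ε) * 13 ≤ (3/2) * ((1/100000) * ε) * 13 :=
    mul_le_mul_of_nonneg_right
      (mul_le_mul_of_nonneg_right hsqrt2 (by positivity)) (by norm_num)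
  linarith
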